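/- arXiv:2303.01895 — 2 statements merged into one kernel-verified Lean document; each statement's English description precedes it below -/
import Mathlib

section
/- Let f : ℝ^d → ℝ^d be continuous, ε > 0, and F(A) = ⋃_{x∈A} B̄_ε(f(x)). If M is a nonempty compact minimal invariant set for F (i.e., F(M) = M and no nonempty compact proper subset of M is invariant), then for every x ∈ M, the ω-limit set ω({x}) equals M. In particular every point of M is recurrent: x ∈ ω({x}). -/
/-- The set-valued map `A ↦ ⋃_{x ∈ A} B̄_ε(f x)`. -/
def svF {d : ℕ} (f : EuclideanSpace ℝ (Fin d) → EuclideanSpace ℝ (Fin d)) (ε : ℝ)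
    (A : Set (EuclideanSpace ℝ (Fin d))) : Set (EuclideanSpace ℝ (Fin d)) :=
  ⋃ x ∈ A, Metric.closedBall (f x) ε

/-- The ω-limit set `ω(A) = ⋂_{k ≥ 1} closure (⋃_{s ≥ k} F^s(A))`. -/
def omegaLim {d : ℕ} (f : EuclideanSpace ℝ (Fin d) → EuclideanSpace ℝ (Fin d)) (ε : ℝ)
    (A : Set (EuclideanSpace ℝ (Fin d))) : Set (EuclideanSpace ℝ (Fin d)) :=
  ⋂ k, ⋂ (_ : 1 ≤ k), closure (⋃ s, ⋃ (_ : k ≤ s), (svF f ε)^[s] A)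

lemma mem_svF_iff {d : ℕ} (f : EuclideanSpace ℝ (Fin d) → EuclideanSpace ℝ (Fin d)) (ε : ℝ)
    (A : Set (EuclideanSpace ℝ (Fin d))) (y : EuclideanSpace ℝ (Fin d)) :
    y ∈ svF f ε A ↔ ∃ z ∈ A, dist y (f z) ≤ ε := by
  simp [svF, Metric.mem_closedBall]

lemma svF_mono {d : ℕ} (f : EuclideanSpace ℝ (Fin d) → EuclideanSpace ℝ (Fin d)) (ε : ℝ)
    {A B : Set (EuclideanSpace ℝ (Fin d))} (h : A ⊆ B) : svF f ε A ⊆ svF f ε B := by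
  intro y hy
  rw [mem_svF_iff] at hy ⊢
  obtain ⟨z, hz, hd⟩ := hy
  exact ⟨z, h hz, hd⟩

theorem minimal_invariant_omegaLim_eq
    (d : ℕ) (f : EuclideanSpace ℝ (Fin d) → EuclideanSpace ℝ (Fin d))
    (hf : Continuous f) (ε : ℝ) (hε : 0 < ε)
    (M : Set (EuclideanSpace ℝ (Fin d))) (hMne : M.Nonempty) (hMc : IsCompact M)
    (hMinv : svF f ε M = M)
    (hMmin : ∀ M' : Set (EuclideanSpace ℝ (Fin d)),
      M' ⊆ M → M'.Nonempty → IsCompact M' → svF f ε M' = M' → M' = M) :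
    ∀ x ∈ M, omegaLim f ε {x} = M ∧ x ∈ omegaLim f ε {x} := by
  intro x hx
  set F := svF f ε with hF
  -- iterates of {x} stay in M
  have hiter : ∀ s : ℕ, F^[s] {x} ⊆ M := by
    intro s
    induction s with
    | zero => simpa using hx
    | succ n ih =>
      rw [Function.iterate_succ_apply']
      calc F (F^[n] {x}) ⊆ F M := svF_mono f ε ih
      _ = M := hMinv
  -- iterates are nonempty
  have hiterne : ∀ s : ℕ, (F^[s] {x}).Nonempty := by
    intro s
    induction s with
    | zero => simp
    | succ n ih =>
      rw [Function.iterate_succ_apply']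
      obtain ⟨z, hz⟩ := ih
      exact ⟨f z, (mem_svF_iff f ε _ _).2 ⟨z, hz, by simp [hε.le]⟩⟩
  set T : ℕ → Set (EuclideanSpace ℝ (Fin d)) :=
    fun k => ⋃ s, ⋃ (_ : k ≤ s), F^[s] {x} with hT
  have hmemT : ∀ k y, y ∈ T k ↔ ∃ s, k ≤ s ∧ y ∈ F^[s] {x} := by
    intro k y; simp [hT]
  have hTsub : ∀ k, T k ⊆ M := by
    intro k y hy
    obtain ⟨s, _, hs⟩ := (hmemT k y).1 hy
    exact hiter s hs
  have hTanti : ∀ k l, k ≤ l → T l ⊆ T k := by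
    intro k l hkl y hy
    obtain ⟨s, hls, hs⟩ := (hmemT l y).1 hy
    exact (hmemT k y).2 ⟨s, hkl.trans hls, hs⟩
  have hTne : ∀ k, (T k).Nonempty := by
    intro k
    obtain ⟨z, hz⟩ := hiterne k
    exact ⟨z, (hmemT k z).2 ⟨k, le_refl k, hz⟩⟩
  set C : ℕ → Set (EuclideanSpace ℝ (Fin d)) := fun k => closure (T k) with hC
  have hCsub : ∀ k, C k ⊆ M := fun k => closure_minimal (hTsub k) hMc.isClosed
  have hCcomp : ∀ k, IsCompact (C k) :=
    fun k => IsCompact.of_isClosed_subset hMc isClosed_closure (hCsub k)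
  have hCne : ∀ k, (C k).Nonempty := fun k => (hTne k).closure
  have hCanti : ∀ k l, k ≤ l → C l ⊆ C k := fun k l h => closure_mono (hTanti k l h)
  -- description of the omega limit set
  set Ω : Set (EuclideanSpace ℝ (Fin d)) := ⋂ n : ℕ, C (n + 1) with hΩ
  have hωΩ : omegaLim f ε {x} = Ω := by
    apply Set.Subset.antisymm
    · intro y hy
      simp only [omegaLim, Set.mem_iInter] at hy
      apply Set.mem_iInter.2
      intro n
      exact hy (n + 1) (Nat.succ_le_succ (Nat.zero_le n))
    · intro y hy
      simp only [omegaLim, Set.mem_iInter]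
      intro k hk
      obtain ⟨m, rfl⟩ := Nat.exists_eq_add_of_le' hk
      exact Set.mem_iInter.1 hy m
  have hΩsub : Ω ⊆ M := (Set.iInter_subset _ 0).trans (hCsub 1)
  have hΩclosed : IsClosed Ω := isClosed_iInter fun _ => isClosed_closure
  have hΩcomp : IsCompact Ω := IsCompact.of_isClosed_subset hMc hΩclosed hΩsub
  have hΩne : Ω.Nonempty := by
    exact IsCompact.nonempty_iInter_of_sequence_nonempty_isCompact_isClosed
      (t := fun n => C (n + 1))
      (fun n => hCanti (n + 1) (n + 1 + 1) (by omega))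
      (fun n => hCne (n + 1)) (hCcomp 1) (fun n => isClosed_closure)
  have hΩmem : ∀ y, y ∈ Ω ↔ ∀ n : ℕ, y ∈ C (n + 1) := by
    intro y; simp [hΩ, Set.mem_iInter]
  -- invariance: F Ω = Ω
  have hFΩ₁ : F Ω ⊆ Ω := by
    intro y hy
    obtain ⟨z, hz, hd⟩ := (mem_svF_iff f ε _ _).1 hy
    rw [hΩmem]
    intro n
    have hzC : z ∈ C (n + 1) := (hΩmem z).1 hz n
    obtain ⟨u, hu, hulim⟩ := mem_closure_iff_seq_limit.1 hzC
    -- v j := f (u j) + (y - f z)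
    set v : ℕ → EuclideanSpace ℝ (Fin d) := fun j => f (u j) + (y - f z) with hv
    have hvT : ∀ j, v j ∈ T (n + 1) := by
      intro j
      obtain ⟨s, hns, hus⟩ := (hmemT (n + 1) (u j)).1 (hu j)
      apply (hmemT (n + 1) (v j)).2
      refine ⟨s + 1, by omega, ?_⟩
      rw [Function.iterate_succ_apply']
      apply (mem_svF_iff f ε _ _).2
      refine ⟨u j, hus, ?_⟩
      have : dist (v j) (f (u j)) = dist y (f z) := by
        simp [hv, dist_eq_norm]
      rw [this]; exact hd
    have hvlim : Filter.Tendsto v Filter.atTop (nhds y) := by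
      have h1 : Filter.Tendsto (fun j => f (u j)) Filter.atTop (nhds (f z)) :=
        (hf.tendsto z).comp hulim
      have h2 : Filter.Tendsto v Filter.atTop (nhds (f z + (y - f z))) :=
        h1.add_const _
      simpa using h2
    exact mem_closure_of_tendsto hvlim (Filter.Eventually.of_forall hvT)
  have hFΩ₂ : Ω ⊆ F Ω := by
    intro y hy
    -- pick approximating points
    have hpick : ∀ n : ℕ, ∃ p : EuclideanSpace ℝ (Fin d),
        p ∈ T (n + 1) ∧ dist y p < 1 / (n + 1) := by
      intro n
      have hyC : y ∈ C (n + 1) := (hΩmem y).1 hy n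
      have : (1 : ℝ) / (n + 1) > 0 := by positivity
      obtain ⟨p, hp1, hp2⟩ := Metric.mem_closure_iff.1 hyC _ this
      exact ⟨p, hp1, hp2⟩
    choose p hpT hpd using hpick
    -- each p n ∈ F (F^[t n] {x}) with t n ≥ n
    have hsplit : ∀ n : ℕ, ∃ z t, n ≤ t ∧ z ∈ F^[t] {x} ∧ dist (p n) (f z) ≤ ε := by
      intro n
      obtain ⟨s, hns, hps⟩ := (hmemT (n + 1) (p n)).1 (hpT n)
      obtain ⟨t, rfl⟩ : ∃ t, s = t + 1 := ⟨s - 1, by omega⟩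
      rw [Function.iterate_succ_apply'] at hps
      obtain ⟨z, hzt, hzd⟩ := (mem_svF_iff f ε _ _).1 hps
      exact ⟨z, t, by omega, hzt, hzd⟩
    choose z t ht hzt hzd using hsplit
    have hzM : ∀ n, z n ∈ M := fun n => hiter (t n) (hzt n)
    obtain ⟨w, hwM, φ, hφ, hwlim⟩ := hMc.tendsto_subseq hzM
    -- w ∈ Ω
    have hwΩ : w ∈ Ω := by
      rw [hΩmem]
      intro n
      apply mem_closure_of_tendsto hwlim
      filter_upwards [Filter.eventually_ge_atTop (n + 1)] with j hj
      have : n + 1 ≤ t (φ j) := le_trans (le_trans hj (hφ.id_le j)) (ht (φ j))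
      exact (hmemT (n + 1) _).2 ⟨t (φ j), this, hzt (φ j)⟩
    -- dist y (f w) ≤ ε
    have hplim : Filter.Tendsto p Filter.atTop (nhds y) := by
      rw [tendsto_iff_dist_tendsto_zero]
      apply squeeze_zero (fun n => dist_nonneg)
        (fun n => le_of_lt (by rw [dist_comm]; exact hpd n))
      exact tendsto_one_div_add_atTop_nhds_zero_nat
    have hplim' : Filter.Tendsto (fun j => p (φ j)) Filter.atTop (nhds y) :=
      hplim.comp hφ.tendsto_atTop
    have hfwlim : Filter.Tendsto (fun j => f (z (φ j))) Filter.atTop (nhds (f w)) :=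
      (hf.tendsto w).comp hwlim
    have hdist : Filter.Tendsto (fun j => dist (p (φ j)) (f (z (φ j))))
        Filter.atTop (nhds (dist y (f w))) := hplim'.dist hfwlim
    have hyfw : dist y (f w) ≤ ε :=
      le_of_tendsto hdist (Filter.Eventually.of_forall fun j => hzd (φ j))
    exact (mem_svF_iff f ε _ _).2 ⟨w, hwΩ, hyfw⟩
  have hΩinv : F Ω = Ω := Set.Subset.antisymm hFΩ₁ hFΩ₂
  have hΩM : Ω = M := hMmin Ω hΩsub hΩne hΩcomp hΩinv
  rw [hωΩ, hΩM]
  exact ⟨rfl, hx⟩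
end

section
/- Let E : X → X be a linear-algebraic model of a contactomorphism at a fixed point: suppose V is a finite-dimensional real vector space with a hyperplane Δ ⊂ V, and T : V → V is an invertible linear map with T(Δ) = Δ. Suppose V = L ⊕ N^u ⊕ N^s is a T-invariant splitting with L ⊆ Δ, where there exist constants 0 < λ < 1 and c > 0 with ‖T^k v‖ ≤ cλ^k‖v‖ for v ∈ N^s and ‖T^{-k} v‖ ≤ cλ^k‖v‖ for v ∈ N^u, for all k ≥ 1. If there exists a vector e_s ∈ N^s with e_s ∉ Δ, then N^u ⊆ Δ. -/
/-- Linear-algebraic core of "no normal saddles for contactomorphisms at Legendrians":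
if `T` preserves a hyperplane `Δ`, admits an invariant splitting `V = L ⊕ Nᵘ ⊕ Nˢ` with
`L ⊆ Δ`, contraction on `Nˢ` and backward contraction on `Nᵘ`, and some stable vector is
transverse to `Δ`, then `Nᵘ ⊆ Δ`. -/
theorem unstable_bundle_in_contact_hyperplane
    (V : Type*) [NormedAddCommGroup V] [NormedSpace ℝ V] [FiniteDimensional ℝ V]
    (Δ : Submodule ℝ V)
    (hΔ : ∃ φ : V →ₗ[ℝ] ℝ, φ ≠ 0 ∧ Δ = LinearMap.ker φ)
    (T : V ≃ₗ[ℝ] V)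
    (hTΔ : Submodule.map (T : V →ₗ[ℝ] V) Δ = Δ)
    (L Nu Ns : Submodule ℝ V)
    (hLΔ : L ≤ Δ)
    (hTL : Submodule.map (T : V →ₗ[ℝ] V) L = L)
    (hTNu : Submodule.map (T : V →ₗ[ℝ] V) Nu = Nu)
    (hTNs : Submodule.map (T : V →ₗ[ℝ] V) Ns = Ns)
    (hsplit : ∀ v : V, ∃! t : V × V × V,
      t.1 ∈ L ∧ t.2.1 ∈ Nu ∧ t.2.2 ∈ Ns ∧ v = t.1 + t.2.1 + t.2.2)
    (c lam : ℝ) (hc : 0 < c) (hlam0 : 0 < lam) (hlam1 : lam < 1)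
    (hstable : ∀ k : ℕ, 1 ≤ k → ∀ v ∈ Ns, ‖(⇑T)^[k] v‖ ≤ c * lam ^ k * ‖v‖)
    (hunstable : ∀ k : ℕ, 1 ≤ k → ∀ v ∈ Nu, ‖(⇑T.symm)^[k] v‖ ≤ c * lam ^ k * ‖v‖)
    (es : V) (hes : es ∈ Ns) (hesΔ : es ∉ Δ) :
    Nu ≤ Δ := by

  obtain ⟨φ, hφ0, rfl⟩ := hΔ
  intro u hu
  have hes0 : φ es ≠ 0 := by simpa [LinearMap.mem_ker] using hesΔ
  have hTmem : ∀ x, x ∈ LinearMap.ker φ → T x ∈ LinearMap.ker φ := by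
    intro x hx
    rw [← hTΔ]
    exact Submodule.mem_map_of_mem hx
  have hiter : ∀ (k : ℕ) (x : V), x ∈ LinearMap.ker φ → (⇑T)^[k] x ∈ LinearMap.ker φ := by
    intro k
    induction k with
    | zero => simpa using fun x hx => hx
    | succ n ih =>
      intro x hx
      rw [Function.iterate_succ_apply']
      exact hTmem _ (ih x hx)
  have hcoe : ∀ k : ℕ, (⇑T)^[k] = ⇑((T : V →ₗ[ℝ] V) ^ k) := by
    intro k; funext z; rw [Module.End.pow_apply]; rfl
  have hlin : ∀ (k : ℕ) (x y : V) (r : ℝ),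
      (⇑T)^[k] (x - r • y) = (⇑T)^[k] x - r • (⇑T)^[k] y := by
    intro k x y r
    rw [hcoe k]
    simp [map_sub, map_smul]
  have hinv : ∀ k : ℕ, (⇑T)^[k] ((⇑T.symm)^[k] u) = u :=
    fun k => (Function.LeftInverse.iterate T.apply_symm_apply k) u
  set ψ := LinearMap.toContinuousLinearMap φ with hψ
  have hψeq : ∀ v : V, ψ v = φ v := fun v => rfl
  have hbound : ∀ v : V, |φ v| ≤ ‖ψ‖ * ‖v‖ := by
    intro v
    have h := ψ.le_opNorm v
    rw [hψeq, Real.norm_eq_abs] at h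
    exact h
  have hψ0 : 0 ≤ ‖ψ‖ := norm_nonneg _
  have hpos : 0 < |φ es| := abs_pos.mpr hes0
  have key : ∀ k : ℕ, φ u = (φ ((⇑T.symm)^[k] u) / φ es) * φ ((⇑T)^[k] es) := by
    intro k
    set b : ℝ := φ ((⇑T.symm)^[k] u) / φ es with hb
    have hx : ((⇑T.symm)^[k] u - b • es) ∈ LinearMap.ker φ := by
      rw [LinearMap.mem_ker, map_sub, map_smul, smul_eq_mul, hb]
      field_simp
      simp
    have h2 := hiter k _ hx
    rw [hlin, hinv] at h2
    rw [LinearMap.mem_ker, map_sub, map_smul, smul_eq_mul, sub_eq_zero] at h2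
    exact h2
  set C : ℝ := ‖ψ‖ * ‖ψ‖ * c * c * ‖u‖ * ‖es‖ / |φ es| with hC
  have hbnd : ∀ k : ℕ, 1 ≤ k → |φ u| ≤ C * (lam ^ 2) ^ k := by
    intro k hk
    have h1 : |φ ((⇑T.symm)^[k] u)| ≤ ‖ψ‖ * (c * lam ^ k * ‖u‖) := by
      calc |φ ((⇑T.symm)^[k] u)| ≤ ‖ψ‖ * ‖(⇑T.symm)^[k] u‖ := hbound _
        _ ≤ ‖ψ‖ * (c * lam ^ k * ‖u‖) :=
            mul_le_mul_of_nonneg_left (hunstable k hk u hu) hψ0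
    have h2 : |φ ((⇑T)^[k] es)| ≤ ‖ψ‖ * (c * lam ^ k * ‖es‖) := by
      calc |φ ((⇑T)^[k] es)| ≤ ‖ψ‖ * ‖(⇑T)^[k] es‖ := hbound _
        _ ≤ ‖ψ‖ * (c * lam ^ k * ‖es‖) :=
            mul_le_mul_of_nonneg_left (hstable k hk es hes) hψ0
    have h1' : |φ ((⇑T.symm)^[k] u)| / |φ es| ≤ ‖ψ‖ * (c * lam ^ k * ‖u‖) / |φ es| :=
      div_le_div_of_nonneg_right h1 hpos.le
    have hmul := mul_le_mul h1' h2 (abs_nonneg _)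
      (div_nonneg (by positivity) hpos.le)
    have heq : ‖ψ‖ * (c * lam ^ k * ‖u‖) / |φ es| * (‖ψ‖ * (c * lam ^ k * ‖es‖))
        = C * (lam ^ 2) ^ k := by
      rw [hC, ← pow_mul]
      field_simp
      ring
    rw [key k, abs_mul, abs_div]
    rw [heq] at hmul
    exact hmul
  have hl2 : lam ^ 2 < 1 := by nlinarith
  have htend : Filter.Tendsto (fun k : ℕ => C * (lam ^ 2) ^ k) Filter.atTop (nhds 0) := by
    have := (tendsto_pow_atTop_nhds_zero_of_lt_one (by positivity) hl2).const_mul C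
    simpa using this
  have habs : |φ u| ≤ 0 :=
    le_of_tendsto_of_tendsto tendsto_const_nhds htend
      (Filter.eventually_atTop.mpr ⟨1, hbnd⟩)
  have : φ u = 0 := abs_nonpos_iff.mp habs
  exact this
end
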